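/- arXiv:2007.02261 — 2 statements merged into one kernel-verified Lean document; each statement's English description precedes it below -/
import Mathlib

section
/- Rely/guarantee rule for sequential composition: let G be a reflexive state relation and assume (1) ρ ⊨ {R,P} p {S,G}; (2) ρ ⊨ {R,S} q {Q,G}; (3) if q = skip then R '' Q ⊆ Q. Then ρ ⊨ {R,P} p ; q {Q,G}. -/
inductive Lang (α : Type) : Type
  | skip : Lang α
  | basic : (α → α) → Lang α
  | cjump : (α → Prop) → ℕ → Lang α → Lang α
  | while : (α → Prop) → Lang α → Lang α → Lang α
  | ite : (α → Prop) → Lang α → Lang α → Lang α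
  | seq : Lang α → Lang α → Lang α
  | par : List (Lang α) → Lang α
  | await : (α → Prop) → Lang α → Lang α

inductive PStep {α : Type} (ρ : ℕ → Lang α) : Lang α × α → Lang α × α → Prop
  | basic {f : α → α} {σ : α} : PStep ρ (Lang.basic f, σ) (Lang.skip, f σ)
  | cjumpT {C : α → Prop} {i : ℕ} {p : Lang α} {σ : α} (h : C σ) :
      PStep ρ (Lang.cjump C i p, σ) (ρ i, σ)
  | cjumpF {C : α → Prop} {i : ℕ} {p : Lang α} {σ : α} (h : ¬ C σ) :
      PStep ρ (Lang.cjump C i p, σ) (p, σ)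
  | await {C : α → Prop} {p : Lang α} {σ σ' : α} (h : C σ)
      (n : ℕ) (f : ℕ → Lang α × α)
      (h0 : f 0 = (p, σ)) (hn : f n = (Lang.skip, σ'))
      (hstep : ∀ i, i < n → PStep ρ (f i) (f (i + 1))) :
      PStep ρ (Lang.await C p, σ) (Lang.skip, σ')
  | iteT {C : α → Prop} {p₁ p₂ : Lang α} {σ : α} (h : C σ) :
      PStep ρ (Lang.ite C p₁ p₂, σ) (p₁, σ)
  | iteF {C : α → Prop} {p₁ p₂ : Lang α} {σ : α} (h : ¬ C σ) :
      PStep ρ (Lang.ite C p₁ p₂, σ) (p₂, σ)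
  | whileT {C : α → Prop} {p₁ p₂ : Lang α} {σ : α} (h : C σ) :
      PStep ρ (Lang.while C p₁ p₂, σ)
        (Lang.seq p₁ (Lang.seq Lang.skip (Lang.while C p₁ p₂)), σ)
  | whileF {C : α → Prop} {p₁ p₂ : Lang α} {σ : α} (h : ¬ C σ) :
      PStep ρ (Lang.while C p₁ p₂, σ) (p₂, σ)
  | seq {p₁ p₁' p₂ : Lang α} {σ σ' : α} (h : PStep ρ (p₁, σ) (p₁', σ')) :
      PStep ρ (Lang.seq p₁ p₂, σ) (Lang.seq p₁' p₂, σ')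
  | seqSkip {p : Lang α} {σ : α} : PStep ρ (Lang.seq Lang.skip p, σ) (p, σ)
  | par {ps : List (Lang α)} {i : ℕ} {p' : Lang α} {σ σ' : α}
      (hi : i < ps.length) (h : PStep ρ (ps.get ⟨i, hi⟩, σ) (p', σ')) :
      PStep ρ (Lang.par ps, σ) (Lang.par (ps.set i p'), σ')
  | parSkip {ps : List (Lang α)} {σ : α} (hne : ps ≠ [])
      (h : ∀ p ∈ ps, p = Lang.skip) :
      PStep ρ (Lang.par ps, σ) (Lang.skip, σ)

def IsSimulation {α β : Type} (ρ : ℕ → Lang α) (ρ' : ℕ → Lang β)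
    (r : α → β → Prop) (X : Lang α → Lang β → Prop) : Prop :=
  (∀ p q σ₁ σ₂ q' σ₂', X p q → r σ₁ σ₂ → PStep ρ' (q, σ₂) (q', σ₂') →
      ∃ p' σ₁', PStep ρ (p, σ₁) (p', σ₁') ∧ X p' q' ∧ r σ₁' σ₂') ∧
  (∀ q, X Lang.skip q → q = Lang.skip) ∧
  (∀ p, X p Lang.skip → p = Lang.skip)

def Corr {α β : Type} (ρ : ℕ → Lang α) (p : Lang α) (r : α → β → Prop)
    (ρ' : ℕ → Lang β) (q : Lang β) : Prop :=
  ∃ X, IsSimulation ρ ρ' r X ∧ X p q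

def MutCorr {α β : Type} (ρ : ℕ → Lang α) (p : Lang α) (r : α → β → Prop)
    (ρ' : ℕ → Lang β) (q : Lang β) : Prop :=
  Corr ρ p r ρ' q ∧ Corr ρ' q (fun b a => r a b) ρ p

/-- A finite potential computation of (ρ, p): a nonempty sequence of `n`
configurations `c 0, …, c (n-1)`, where the step from `c i` to `c (i+1)` is
an environment step when `e i = true` (program part unchanged) and a program
step otherwise. -/
def IsComp {α : Type} (ρ : ℕ → Lang α) (p : Lang α)
    (n : ℕ) (c : ℕ → Lang α × α) (e : ℕ → Bool) : Prop :=
  0 < n ∧ (c 0).1 = p ∧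
  ∀ i, i + 1 < n →
    (e i = true → (c (i + 1)).1 = (c i).1) ∧
    (e i = false → PStep ρ (c i) (c (i + 1)))

/-- Environment condition E(R). -/
def EnvC {α : Type} (R : α → α → Prop) (n : ℕ)
    (c : ℕ → Lang α × α) (e : ℕ → Bool) : Prop :=
  ∀ i, i + 1 < n → e i = true → R (c i).2 (c (i + 1)).2

/-- Program condition Pr(G). -/
def ProgC {α : Type} (G : α → α → Prop) (n : ℕ)
    (c : ℕ → Lang α × α) (e : ℕ → Bool) : Prop :=
  ∀ i, i + 1 < n → e i = false → G (c i).2 (c (i + 1)).2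

/-- Output condition Out(Q): the state of the first skip-configuration
(if any) satisfies Q. -/
def OutC {α : Type} (Q : α → Prop) (n : ℕ) (c : ℕ → Lang α × α) : Prop :=
  ∀ i, i < n → (c i).1 = Lang.skip → (∀ j, j < i → (c j).1 ≠ Lang.skip) →
    Q (c i).2

/-- Extended Hoare triple over finite potential computations:
ρ ⊨ {R,P} p {Q,G}. -/
def HoareValid {α : Type} (ρ : ℕ → Lang α) (R : α → α → Prop) (P : α → Prop)
    (p : Lang α) (Q : α → Prop) (G : α → α → Prop) : Prop :=
  ∀ n c e, IsComp ρ p n c e → EnvC R n c e → P (c 0).2 →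
    OutC Q n c ∧ ProgC G n c e


private def innerOf {α : Type} : Lang α → Lang α
  | Lang.seq a _ => a
  | _ => Lang.skip

private lemma no_step_skip {α : Type} {ρ : ℕ → Lang α} {σ : α} {t : Lang α × α}
    (h : PStep ρ (Lang.skip, σ) t) : False := by
  cases h

private lemma seq_inv {α : Type} {ρ : ℕ → Lang α} {a b x : Lang α} {σ σ' : α}
    (h : PStep ρ (Lang.seq a b, σ) (x, σ')) :
    (∃ a', x = Lang.seq a' b ∧ PStep ρ (a, σ) (a', σ')) ∨
    (a = Lang.skip ∧ x = b ∧ σ' = σ) := by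
  cases h with
  | seq h' => exact Or.inl ⟨_, rfl, h'⟩
  | seqSkip => exact Or.inr ⟨rfl, rfl, rfl⟩

private lemma seq_ne {α : Type} (a q : Lang α) : Lang.seq a q ≠ q := by
  intro h
  have h2 : sizeOf (Lang.seq a q) = sizeOf q := by rw [h]
  simp at h2

private lemma seq_ne_skip {α : Type} (a q : Lang α) : Lang.seq a q ≠ Lang.skip := by
  intro h
  cases h

theorem seq_rule {α : Type} (ρ : ℕ → Lang α)
    (G : α → α → Prop) (hGrefl : ∀ a, G a a)
    (R : α → α → Prop) (P S Q : α → Prop) (p q : Lang α)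
    (h1 : HoareValid ρ R P p S G)
    (h2 : HoareValid ρ R S q Q G)
    (h3 : q = Lang.skip → ∀ σ σ', Q σ → R σ σ' → Q σ') :
    HoareValid ρ R P (Lang.seq p q) Q G := by
  intro n c e hcomp henv hP
  classical
  obtain ⟨hn, hc0, hstep⟩ := hcomp
  set pr : ℕ → Lang α := fun i => innerOf (c i).1 with hpr
  have hprSF : ∀ i, (∃ a, (c i).1 = Lang.seq a q) → (c i).1 = Lang.seq (pr i) q := by
    intro i ⟨a, ha⟩
    simp only [hpr]
    rw [ha]
    rfl
  have hinner : ∀ i, i + 1 < n → (∃ a, (c i).1 = Lang.seq a q) →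
      (∃ a, (c (i+1)).1 = Lang.seq a q) →
      (e i = true → pr (i+1) = pr i) ∧
      (e i = false → PStep ρ (pr i, (c i).2) (pr (i+1), (c (i+1)).2)) := by
    intro i hi hSFi hSFi1
    constructor
    · intro he
      have h := (hstep i hi).1 he
      simp only [hpr]
      rw [h]
    · intro he
      have hs := (hstep i hi).2 he
      have ha1 := hprSF i hSFi
      have ha2 := hprSF (i+1) hSFi1
      have hs' : PStep ρ (Lang.seq (pr i) q, (c i).2)
          ((c (i+1)).1, (c (i+1)).2) := by rw [← ha1]; exact hs
      rcases seq_inv hs' with ⟨a', ha', hstep'⟩ | ⟨_, hq, _⟩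
      · rw [ha2] at ha'
        injection ha' with h1 _
        rw [h1]
        exact hstep'
      · rw [ha2] at hq
        exact absurd hq (seq_ne _ q)
  have phase1 : ∀ k, k ≤ n → 0 < k → (∀ i, i < k → ∃ a, (c i).1 = Lang.seq a q) →
      OutC S k (fun i => (pr i, (c i).2)) ∧ ProgC G k (fun i => (pr i, (c i).2)) e := by
    intro k hkn hk0 hSFlt
    apply h1
    · refine ⟨hk0, ?_, ?_⟩
      · show pr 0 = p
        have h := hprSF 0 ⟨p, hc0⟩
        rw [hc0] at h
        injection h with h1 h2
        exact h1.symm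
      · intro i hi
        exact hinner i (lt_of_lt_of_le hi hkn) (hSFlt i (by omega)) (hSFlt (i+1) hi)
    · intro i hi he
      exact henv i (by omega) he
    · exact hP
  by_cases hK : ∃ i, i < n ∧ ¬ ∃ a, (c i).1 = Lang.seq a q
  · -- phase boundary k exists
    set k := Nat.find hK with hkdef
    obtain ⟨hkn, hkSF⟩ := Nat.find_spec hK
    have hSFlt : ∀ i, i < k → ∃ a, (c i).1 = Lang.seq a q := by
      intro i hik
      by_contra h
      exact Nat.find_min hK hik ⟨hik.trans hkn, h⟩
    rw [← hkdef] at hkn hkSF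
    have hk0 : 0 < k := by
      by_contra h
      have hk0' : k = 0 := by omega
      rw [hk0'] at hkSF
      exact hkSF ⟨p, hc0⟩
    -- the step at k-1 is seqSkip
    have hstepk : pr (k-1) = Lang.skip ∧ c k = (q, (c (k-1)).2) := by
      have hk1n : k - 1 + 1 < n := by omega
      have hSFk1 := hprSF (k-1) (hSFlt (k-1) (by omega))
      have heF : e (k-1) = false := by
        by_contra h
        have he : e (k-1) = true := by simpa using h
        have h2 := (hstep (k-1) hk1n).1 he
        rw [show k - 1 + 1 = k by omega] at h2
        exact hkSF ⟨pr (k-1), by rw [h2, hSFk1]⟩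
      have hs := (hstep (k-1) hk1n).2 heF
      rw [show k - 1 + 1 = k by omega] at hs
      have hs' : PStep ρ (Lang.seq (pr (k-1)) q, (c (k-1)).2) ((c k).1, (c k).2) := by
        rw [← hSFk1]; exact hs
      rcases seq_inv hs' with ⟨a', ha', _⟩ | ⟨hsk, hq, hσ⟩
      · exact absurd ⟨a', ha'⟩ hkSF
      · exact ⟨hsk, Prod.ext hq hσ⟩
    obtain ⟨hprk1, hck⟩ := hstepk
    obtain ⟨hout1, hpg1⟩ := phase1 k hkn.le hk0 hSFlt
    -- j : first index where pr is skip
    have hJ : ∃ i, i < k ∧ pr i = Lang.skip := ⟨k-1, by omega, hprk1⟩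
    set j := Nat.find hJ with hjdef
    obtain ⟨hjk, hprj⟩ := Nat.find_spec hJ
    have hjmin : ∀ t, t < j → pr t ≠ Lang.skip := fun t ht h =>
      Nat.find_min hJ ht ⟨ht.trans hjk, h⟩
    have hSj : S (c j).2 := hout1 j hjk hprj (fun t ht => hjmin t ht)
    -- tail claims
    have henvtail : ∀ t, t < k → pr t = Lang.skip → t + 1 < k →
        e t = true ∧ pr (t+1) = Lang.skip := by
      intro t htk hprt ht1k
      have ht1n : t + 1 < n := by omega
      by_cases he : e t = true
      · refine ⟨he, ?_⟩
        have h := (hstep t ht1n).1 he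
        simp only [hpr] at hprt ⊢
        rw [h]
        exact hprt
      · have he' : e t = false := by simpa using he
        have hs := (hstep t ht1n).2 he'
        have ha1 := hprSF t (hSFlt t htk)
        have hs2 : PStep ρ (Lang.seq Lang.skip q, (c t).2) ((c (t+1)).1, (c (t+1)).2) := by
          rw [← hprt, ← ha1]; exact hs
        rcases seq_inv hs2 with ⟨a', _, hstep'⟩ | ⟨_, hq, _⟩
        · exact absurd hstep' (fun h => no_step_skip h)
        · obtain ⟨a, ha⟩ := hSFlt (t+1) ht1k
          rw [ha] at hq
          exact absurd hq (seq_ne a q)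
    have hskiptail : ∀ d, j + d < k → pr (j + d) = Lang.skip := by
      intro d
      induction d with
      | zero => intro _; simpa using hprj
      | succ d ih =>
        intro h
        have hd := ih (by omega)
        have := (henvtail (j+d) (by omega) hd (by omega)).2
        rw [show j + (d+1) = (j + d) + 1 by omega]
        exact this
    have henvtail2 : ∀ t, j ≤ t → t + 1 < k → e t = true := by
      intro t h1t h2t
      have hsk : pr t = Lang.skip := by
        have := hskiptail (t - j) (by omega)
        rw [show j + (t - j) = t by omega] at this
        exact this
      exact (henvtail t (by omega) hsk h2t).1
    -- phase 2 computation
    set m := n - 1 - j with hm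
    set c₂ : ℕ → Lang α × α := fun i => if j + i < k then (q, (c (j+i)).2) else c (j+i+1) with hc₂
    set e₂ : ℕ → Bool := fun i => if j + i + 1 < k then e (j+i) else e (j+i+1) with he₂
    have hcomp2 : IsComp ρ q m c₂ e₂ := by
      refine ⟨by omega, ?_, ?_⟩
      · show (c₂ 0).1 = q
        simp only [hc₂]
        rw [if_pos (by omega : j + 0 < k)]
      · intro i hi1
        have hain : j + i + 2 < n := by omega
        rcases lt_trichotomy (j + i + 1) k with hlt | heq | hgt
        · have het : e (j+i) = true := henvtail2 (j+i) (by omega) hlt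
          have he2 : e₂ i = e (j + i) := by simp only [he₂]; rw [if_pos hlt]
          constructor
          · intro _
            show (c₂ (i+1)).1 = (c₂ i).1
            simp only [hc₂]
            rw [if_pos (show j + (i+1) < k by omega), if_pos (show j + i < k by omega)]
          · intro hef
            rw [he2] at hef
            rw [hef] at het
            simp at het
        · have hc2i : c₂ i = c k := by
            simp only [hc₂]
            rw [if_pos (show j + i < k by omega), show j + i = k - 1 by omega, ← hck]
          have hc2i1 : c₂ (i+1) = c (k+1) := by
            simp only [hc₂]
            rw [if_neg (show ¬ j + (i+1) < k by omega),
              show j + (i+1) + 1 = k + 1 by omega]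
          have he2 : e₂ i = e k := by
            simp only [he₂]
            rw [if_neg (show ¬ j + i + 1 < k by omega), show j + i + 1 = k by omega]
          rw [hc2i, hc2i1, he2]
          exact hstep k (by omega)
        · have hc2i : c₂ i = c (j+i+1) := by
            simp only [hc₂]; rw [if_neg (show ¬ j + i < k by omega)]
          have hc2i1 : c₂ (i+1) = c (j+i+2) := by
            simp only [hc₂]
            rw [if_neg (show ¬ j + (i+1) < k by omega),
              show j + (i+1) + 1 = j + i + 2 by omega]
          have he2 : e₂ i = e (j+i+1) := by
            simp only [he₂]; rw [if_neg (show ¬ j + i + 1 < k by omega)]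
          rw [hc2i, hc2i1, he2]
          exact hstep (j+i+1) (by omega)
    have henv2 : EnvC R m c₂ e₂ := by
      intro i hi1 hei
      have hain : j + i + 2 < n := by omega
      rcases lt_trichotomy (j + i + 1) k with hlt | heq | hgt
      · have he2 : e₂ i = e (j + i) := by simp only [he₂]; rw [if_pos hlt]
        have h1 : (c₂ i).2 = (c (j+i)).2 := by
          simp only [hc₂]; rw [if_pos (show j + i < k by omega)]
        have h2 : (c₂ (i+1)).2 = (c (j+i+1)).2 := by
          simp only [hc₂]; rw [if_pos (show j + (i+1) < k by omega)]; rfl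
        rw [h1, h2]
        exact henv (j+i) (by omega) (by rw [← he2]; exact hei)
      · have h1 : (c₂ i).2 = (c k).2 := by
          simp only [hc₂]
          rw [if_pos (show j + i < k by omega), show j + i = k - 1 by omega, ← hck]
        have h2 : (c₂ (i+1)).2 = (c (k+1)).2 := by
          simp only [hc₂]
          rw [if_neg (show ¬ j + (i+1) < k by omega),
            show j + (i+1) + 1 = k + 1 by omega]
        have he2 : e₂ i = e k := by
          simp only [he₂]
          rw [if_neg (show ¬ j + i + 1 < k by omega), show j + i + 1 = k by omega]
        rw [h1, h2]
        exact henv k (by omega) (by rw [← he2]; exact hei)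
      · have h1 : (c₂ i).2 = (c (j+i+1)).2 := by
          simp only [hc₂]; rw [if_neg (show ¬ j + i < k by omega)]
        have h2 : (c₂ (i+1)).2 = (c (j+i+2)).2 := by
          simp only [hc₂]
          rw [if_neg (show ¬ j + (i+1) < k by omega),
            show j + (i+1) + 1 = j + i + 2 by omega]
        have he2 : e₂ i = e (j+i+1) := by
          simp only [he₂]; rw [if_neg (show ¬ j + i + 1 < k by omega)]
        rw [h1, h2]
        exact henv (j+i+1) (by omega) (by rw [← he2]; exact hei)
    have hS2 : S (c₂ 0).2 := by
      have h1 : (c₂ 0).2 = (c j).2 := by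
        simp only [hc₂]; rw [if_pos (show j + 0 < k by omega)]; rfl
      rw [h1]; exact hSj
    obtain ⟨hout2, hpg2⟩ := h2 m c₂ e₂ hcomp2 henv2 hS2
    constructor
    · -- OutC Q n c
      intro t htn hts htfirst
      have htk : k ≤ t := by
        by_contra h
        obtain ⟨a, ha⟩ := hSFlt t (by omega)
        rw [ha] at hts
        exact absurd hts (seq_ne_skip a q)
      by_cases hq : q = Lang.skip
      · have htk' : t = k := by
          by_contra h
          exact htfirst k (by omega) (by rw [hck]; exact hq)
        have hQj : Q (c j).2 := by
          have hfirst0 : ∀ s, s < 0 → (c₂ s).1 ≠ Lang.skip := fun s hs => absurd hs (by omega)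
          have h0 : (c₂ 0).1 = Lang.skip := by
            simp only [hc₂]
            rw [if_pos (show j + 0 < k by omega)]
            exact hq
          have := hout2 0 (by omega) h0 hfirst0
          have h1 : (c₂ 0).2 = (c j).2 := by
            simp only [hc₂]; rw [if_pos (show j + 0 < k by omega)]; rfl
          rw [h1] at this
          exact this
        have hQchain : ∀ d, j + d < k → Q (c (j+d)).2 := by
          intro d
          induction d with
          | zero => intro _; simpa using hQj
          | succ d ih =>
            intro hd
            have hQd := ih (by omega)
            have het := henvtail2 (j+d) (by omega) (by omega)
            have hR := henv (j+d) (by omega) het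
            rw [show j + (d+1) = (j + d) + 1 by omega]
            exact h3 hq _ _ hQd hR
        have hQk1 : Q (c (k-1)).2 := by
          have := hQchain (k-1-j) (by omega)
          rw [show j + (k-1-j) = k-1 by omega] at this
          exact this
        rw [htk', hck]
        exact hQk1
      · -- q ≠ skip
        set i := t - j - 1 with hidef
        have hji : j + i + 1 = t := by omega
        have him : i < m := by omega
        have hc2t : c₂ i = c t := by
          simp only [hc₂]
          by_cases htk2 : j + i < k
          · rw [if_pos htk2, show j + i = k - 1 by omega, ← hck, show t = k by omega]
          · rw [if_neg htk2, hji]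
        have hfirst2 : ∀ s, s < i → (c₂ s).1 ≠ Lang.skip := by
          intro s hs
          simp only [hc₂]
          by_cases hsk : j + s < k
          · rw [if_pos hsk]; exact hq
          · rw [if_neg hsk]; exact htfirst (j+s+1) (by omega)
        have := hout2 i him (by rw [hc2t]; exact hts) hfirst2
        rw [hc2t] at this
        exact this
    · -- ProgC G n c e
      intro t htn hef
      rcases lt_trichotomy (t+1) k with hlt | heq | hgt
      · exact hpg1 t hlt hef
      · have h21 : (c (t+1)).2 = (c t).2 := by
          rw [show t + 1 = k by omega, hck, show t = k - 1 by omega]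
        rw [h21]
        exact hGrefl _
      · set i := t - j - 1 with hidef
        have hji : j + i + 1 = t := by omega
        have h1 : (c₂ i).2 = (c t).2 := by
          simp only [hc₂]
          by_cases htk2 : j + i < k
          · rw [if_pos htk2, show j + i = k - 1 by omega, ← hck, show t = k by omega]
          · rw [if_neg htk2, hji]
        have h2 : (c₂ (i+1)).2 = (c (t+1)).2 := by
          simp only [hc₂]
          rw [if_neg (show ¬ j + (i+1) < k by omega),
            show j + (i+1) + 1 = t + 1 by omega]
        have he2 : e₂ i = e t := by
          simp only [he₂]
          rw [if_neg (show ¬ j + i + 1 < k by omega), hji]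
        have := hpg2 i (by omega) (by rw [he2]; exact hef)
        rw [h1, h2] at this
        exact this
  · -- no boundary: entire computation is in phase 1
    push_neg at hK
    obtain ⟨hout1, hpg1⟩ := phase1 n le_rfl hn hK
    constructor
    · intro t htn hts _
      obtain ⟨a, ha⟩ := hK t htn
      rw [ha] at hts
      exact absurd hts (seq_ne_skip a q)
    · exact hpg1
end

section
/- Rely/guarantee rule for while-statements: let G be a reflexive state relation and assume (1) R '' P ⊆ P (stability of P under R); (2) ρ ⊨ {R, P ∩ C} p {P, G}; (3) ρ ⊨ {R, P ∩ ¬C} q {Q, G}, where ¬C denotes the complement of the state predicate C. Then ρ ⊨ {R, P} while C p q {Q, G}. -/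
section Helpers
variable {α : Type} {ρ : ℕ → Lang α}

lemma no_pstep_skip {σ : α} {y : Lang α × α} (h : PStep ρ (Lang.skip, σ) y) : False := by
  cases h

lemma pstep_seq_inv {x w : Lang α} {σ : α} {y : Lang α × α}
    (h : PStep ρ (Lang.seq x w, σ) y) :
    (∃ x' σ', y = (Lang.seq x' w, σ') ∧ PStep ρ (x, σ) (x', σ')) ∨
    (x = Lang.skip ∧ y = (w, σ)) := by
  cases h with
  | seq h' => exact Or.inl ⟨_, _, rfl, h'⟩
  | seqSkip => exact Or.inr ⟨rfl, rfl⟩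

lemma pstep_while_inv {C : α → Prop} {p q : Lang α} {σ : α} {y : Lang α × α}
    (h : PStep ρ (Lang.while C p q, σ) y) :
    (C σ ∧ y = (Lang.seq p (Lang.seq Lang.skip (Lang.while C p q)), σ)) ∨
    (¬ C σ ∧ y = (q, σ)) := by
  cases h with
  | whileT h' => exact Or.inl ⟨h', rfl⟩
  | whileF h' => exact Or.inr ⟨h', rfl⟩

lemma seq_ne_right (x w : Lang α) : Lang.seq x w ≠ w := by
  intro h
  have h2 : sizeOf (Lang.seq x w) = sizeOf w := by rw [h]
  simp only [Lang.seq.sizeOf_spec] at h2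
  omega

lemma isComp_shift {p : Lang α} {n : ℕ} {c : ℕ → Lang α × α} {e : ℕ → Bool}
    (h : IsComp ρ p n c e) (k : ℕ) (hk : k < n) :
    IsComp ρ (c k).1 (n - k) (fun i => c (i + k)) (fun i => e (i + k)) := by
  obtain ⟨hn, h0, hs⟩ := h
  refine ⟨by omega, by show (c (0 + k)).1 = (c k).1; rw [Nat.zero_add], ?_⟩
  intro i hi
  have h' := hs (i + k) (by omega)
  have he : i + 1 + k = i + k + 1 := by omega
  simp only [he]
  exact h'

lemma envC_shift {R : α → α → Prop} {n : ℕ} {c : ℕ → Lang α × α} {e : ℕ → Bool}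
    (h : EnvC R n c e) (k : ℕ) :
    EnvC R (n - k) (fun i => c (i + k)) (fun i => e (i + k)) := by
  intro i hi he
  have h2 := h (i + k) (by omega) he
  have heq : i + 1 + k = i + k + 1 := by omega
  simp only [heq]
  exact h2

lemma combine {Q : α → Prop} {G : α → α → Prop} {n : ℕ} {c : ℕ → Lang α × α} {e : ℕ → Bool}
    (k : ℕ) (hk : k < n)
    (hskip : ∀ j, j < k → (c j).1 ≠ Lang.skip)
    (hG : ∀ j, j + 1 ≤ k → e j = false → G (c j).2 (c (j + 1)).2)
    (hsuf : OutC Q (n - k) (fun i => c (i + k)) ∧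
      ProgC G (n - k) (fun i => c (i + k)) (fun i => e (i + k))) :
    OutC Q n c ∧ ProgC G n c e := by
  obtain ⟨hout, hprog⟩ := hsuf
  constructor
  · intro i hi hsk hfirst
    have hik : k ≤ i := by
      by_contra h'
      exact hskip i (by omega) hsk
    have h' := hout (i - k) (by omega)
      (by show (c (i - k + k)).1 = Lang.skip; rw [show i - k + k = i by omega]; exact hsk)
      (fun j hj => by
        show (c (j + k)).1 ≠ Lang.skip
        have hj' : j + k < i := by omega
        exact hfirst (j + k) hj')
    have h'' : Q (c (i - k + k)).2 := h'
    rw [show i - k + k = i by omega] at h''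
    exact h''
  · intro i hi hf
    rcases Nat.lt_or_ge i k with h' | h'
    · exact hG i (by omega) hf
    · have h2 := hprog (i - k) (by omega)
        (by show e (i - k + k) = false; rw [show i - k + k = i by omega]; exact hf)
      have h3 : G (c (i - k + k)).2 (c (i - k + 1 + k)).2 := h2
      rw [show i - k + k = i by omega, show i - k + 1 + k = i + 1 by omega] at h3
      exact h3

lemma skip_rule {R G : α → α → Prop} {P : α → Prop}
    (h1 : ∀ σ σ', P σ → R σ σ' → P σ') :
    HoareValid ρ R P Lang.skip P G := by
  intro n c e hc hE hP
  obtain ⟨hn, h0, hs⟩ := hc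
  have key : ∀ i, i < n → (c i).1 = Lang.skip ∧ P (c i).2 := by
    intro i
    induction i with
    | zero => exact fun _ => ⟨h0, hP⟩
    | succ i ih =>
      intro hi
      obtain ⟨hsk, hp⟩ := ih (by omega)
      have hstep := hs i (by omega)
      cases he : e i with
      | false =>
        exfalso
        have h' := hstep.2 he
        have hci : c i = (Lang.skip, (c i).2) := by rw [← hsk]
        rw [hci] at h'
        exact no_pstep_skip h'
      | true =>
        exact ⟨(hstep.1 he).trans hsk, h1 _ _ hp (hE i (by omega) he)⟩
  constructor
  · intro i hi _ _
    exact (key i hi).2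
  · intro i hi hf
    exfalso
    have h' := (hs i (by omega)).2 hf
    have hci : c i = (Lang.skip, (c i).2) := by rw [← (key i (by omega)).1]
    rw [hci] at h'
    exact no_pstep_skip h'

end Helpers

section Region
variable {α : Type} {ρ : ℕ → Lang α}

lemma seq_region {R G : α → α → Prop} {P' Pout : α → Prop} {p₁ w : Lang α}
    (hGrefl : ∀ a, G a a)
    (h1 : ∀ σ σ', Pout σ → R σ σ' → Pout σ')
    (hH : HoareValid ρ R P' p₁ Pout G)
    {n : ℕ} {c : ℕ → Lang α × α} {e : ℕ → Bool}
    (hc : IsComp ρ (Lang.seq p₁ w) n c e) (hE : EnvC R n c e)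
    (hP : P' (c 0).2) :
    ((∀ i, i < n → ∃ x, (c i).1 = Lang.seq x w) ∧ ProgC G n c e) ∨
    (∃ m, m + 1 < n ∧ (∀ i, i ≤ m → ∃ x, (c i).1 = Lang.seq x w) ∧
      e m = false ∧ c (m + 1) = (w, (c m).2) ∧ Pout (c m).2 ∧
      ProgC G (m + 2) c e) := by
  classical
  obtain ⟨hn, h0, hs⟩ := hc
  -- Claim A: prefix analysis
  have claimA : ∀ i, i < n → (∀ j, j ≤ i → ∃ x, (c j).1 = Lang.seq x w) ∨
      (∃ m, m < i ∧ m + 1 < n ∧ (∀ j, j ≤ m → ∃ x, (c j).1 = Lang.seq x w) ∧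
        e m = false ∧ (c m).1 = Lang.seq Lang.skip w ∧ c (m + 1) = (w, (c m).2)) := by
    intro i
    induction i with
    | zero =>
      intro _
      left
      intro j hj
      have : j = 0 := by omega
      subst this
      exact ⟨p₁, h0⟩
    | succ i ih =>
      intro hi
      rcases ih (by omega) with hL | ⟨m, hm, hm1, hmsh, hme, hmsk, hmex⟩
      · cases he : e i with
        | true =>
          left
          intro j hj
          rcases Nat.lt_or_ge j (i + 1) with h' | h'
          · exact hL j (by omega)
          · have hj' : j = i + 1 := by omega
            subst hj'
            obtain ⟨x, hx⟩ := hL i le_rfl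
            exact ⟨x, by rw [(hs i (by omega)).1 he, hx]⟩
        | false =>
          obtain ⟨x, hx⟩ := hL i le_rfl
          have hstep := (hs i (by omega)).2 he
          have hci : c i = (Lang.seq x w, (c i).2) := by rw [← hx]
          rw [hci] at hstep
          rcases pstep_seq_inv hstep with ⟨x', σ', hy, _⟩ | ⟨hxs, hy⟩
          · left
            intro j hj
            rcases Nat.lt_or_ge j (i + 1) with h' | h'
            · exact hL j (by omega)
            · have hj' : j = i + 1 := by omega
              subst hj'
              exact ⟨x', by rw [hy]⟩
          · right
            subst hxs
            exact ⟨i, by omega, by omega, fun j hj => hL j hj, he, hx, hy⟩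
      · right
        exact ⟨m, by omega, hm1, hmsh, hme, hmsk, hmex⟩
  -- common builder
  have build : ∀ L, 0 < L → L ≤ n → (∀ j, j < L → ∃ x, (c j).1 = Lang.seq x w) →
      ∃ d : ℕ → Lang α, (∀ j, j < L → (c j).1 = Lang.seq (d j) w) ∧
        IsComp ρ p₁ L (fun i => (d i, (c i).2)) e ∧
        OutC Pout L (fun i => (d i, (c i).2)) ∧
        ProgC G L (fun i => (d i, (c i).2)) e := by
    intro L hL0 hLn hshape
    set d : ℕ → Lang α :=
      fun i => if h : ∃ x, (c i).1 = Lang.seq x w then h.choose else Lang.skip with hd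
    have hdj : ∀ j, j < L → (c j).1 = Lang.seq (d j) w := by
      intro j hj
      have h' := hshape j hj
      simp only [hd, dif_pos h']
      exact h'.choose_spec
    have hcomp : IsComp ρ p₁ L (fun i => (d i, (c i).2)) e := by
      refine ⟨hL0, ?_, ?_⟩
      · have h' := hdj 0 hL0
        rw [h0] at h'
        have := (Lang.seq.injEq _ _ _ _).mp h'
        exact this.1.symm
      · intro i hi
        have hi1 := hdj i (by omega)
        have hi2 := hdj (i + 1) (by omega)
        constructor
        · intro he
          have h' := (hs i (by omega)).1 he
          rw [hi1, hi2] at h'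
          have := (Lang.seq.injEq _ _ _ _).mp h'
          show (d (i + 1), (c (i + 1)).2).1 = (d i, (c i).2).1
          simp [this.1]
        · intro he
          have hstep := (hs i (by omega)).2 he
          have hci : c i = (Lang.seq (d i) w, (c i).2) := by rw [← hi1]
          rw [hci] at hstep
          rcases pstep_seq_inv hstep with ⟨x', σ', hy, hst⟩ | ⟨_, hy⟩
          · have hx' : Lang.seq (d (i + 1)) w = Lang.seq x' w := by
              rw [← hi2, hy]
            have hσ' : (c (i + 1)).2 = σ' := by rw [hy]
            have hde := (Lang.seq.injEq _ _ _ _).mp hx'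
            show PStep ρ (d i, (c i).2) (d (i + 1), (c (i + 1)).2)
            rw [hde.1, hσ']
            exact hst
          · exfalso
            apply seq_ne_right (d (i + 1)) w
            rw [← hi2, hy]
    have hEnv : EnvC R L (fun i => (d i, (c i).2)) e :=
      fun i hi he => hE i (by omega) he
    obtain ⟨ho, hp⟩ := hH L _ e hcomp hEnv hP
    exact ⟨d, hdj, hcomp, ho, hp⟩
  rcases claimA (n - 1) (by omega) with hL | ⟨m, hm, hm1, hmsh, hme, hmsk, hmex⟩
  · -- no exit
    left
    have hshape : ∀ j, j < n → ∃ x, (c j).1 = Lang.seq x w := fun j hj => hL j (by omega)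
    obtain ⟨d, hdj, hcomp, ho, hp⟩ := build n hn le_rfl hshape
    exact ⟨hshape, fun i hi he => hp i hi he⟩
  · -- exit at m
    right
    have hshape : ∀ j, j < m + 1 → ∃ x, (c j).1 = Lang.seq x w := fun j hj => hmsh j (by omega)
    obtain ⟨d, hdj, hcomp, ho, hp⟩ := build (m + 1) (by omega) (by omega) hshape
    have hdm : d m = Lang.skip := by
      have h' := hdj m (by omega)
      rw [hmsk] at h'
      exact ((Lang.seq.injEq _ _ _ _).mp h').1.symm
    -- least skip index
    have hexj : ∃ j, j ≤ m ∧ d j = Lang.skip := ⟨m, le_rfl, hdm⟩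
    set j := Nat.find hexj with hj
    obtain ⟨hjm, hjsk⟩ := Nat.find_spec hexj
    have hPj : Pout (c j).2 := by
      have := ho j (by omega) hjsk (fun j' hj' => by
        show (d j', (c j').2).1 ≠ Lang.skip
        intro hcon
        exact Nat.find_min hexj hj' ⟨by omega, hcon⟩)
      exact this
    have prop : ∀ i, j ≤ i → i ≤ m → d i = Lang.skip ∧ Pout (c i).2 := by
      intro i hji
      induction i, hji using Nat.le_induction with
      | base => exact fun _ => ⟨hjsk, hPj⟩
      | succ i hji ih =>
        intro him
        obtain ⟨hski, hpi⟩ := ih (by omega)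
        have hstep := hcomp.2.2 i (by omega)
        cases he : e i with
        | false =>
          exfalso
          have h'' : PStep ρ (d i, (c i).2) (d (i + 1), (c (i + 1)).2) := hstep.2 he
          rw [hski] at h''
          exact no_pstep_skip h''
        | true =>
          have h' := hstep.1 he
          have hd1 : d (i + 1) = d i := h'
          refine ⟨hd1.trans hski, h1 _ _ hpi (hE i (by omega) he)⟩
    have hPm : Pout (c m).2 := (prop m hjm le_rfl).2
    refine ⟨m, hm1, hmsh, hme, hmex, hPm, ?_⟩
    intro i hi he
    rcases Nat.lt_or_ge i m with h' | h'
    · exact hp i (by omega) he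
    · have him : i = m := by omega
      rw [him]
      have h2 : (c (m + 1)).2 = (c m).2 := by rw [hmex]
      rw [h2]
      exact hGrefl _
end Region

theorem while_rule {α : Type} (ρ : ℕ → Lang α)
    (G : α → α → Prop) (hGrefl : ∀ a, G a a)
    (R : α → α → Prop) (P Q C : α → Prop) (p q : Lang α)
    (h1 : ∀ σ σ', P σ → R σ σ' → P σ')
    (h2 : HoareValid ρ R (fun σ => P σ ∧ C σ) p P G)
    (h3 : HoareValid ρ R (fun σ => P σ ∧ ¬ C σ) q Q G) :
    HoareValid ρ R P (Lang.while C p q) Q G := by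

  classical
  intro n
  induction n using Nat.strong_induction_on with
  | _ n IH =>
  intro c e hc hE hP
  obtain ⟨hn, h0, hs⟩ := hc
  by_cases hex : ∃ k, k + 1 < n ∧ e k = false
  · obtain ⟨hk1, hkf⟩ := Nat.find_spec hex
    set k := Nat.find hex with hkdef
    have hkmin : ∀ j, j < k → e j = true := by
      intro j hj
      have h' := Nat.find_min hex hj
      push_neg at h'
      have h'' := h' (by omega)
      simpa using h''
    have hpre : ∀ i, i ≤ k → (c i).1 = Lang.while C p q ∧ P (c i).2 := by
      intro i
      induction i with
      | zero => exact fun _ => ⟨h0, hP⟩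
      | succ i ih =>
        intro hi
        obtain ⟨hwi, hpi⟩ := ih (by omega)
        have he := hkmin i (by omega)
        exact ⟨by rw [(hs i (by omega)).1 he, hwi], h1 _ _ hpi (hE i (by omega) he)⟩
    obtain ⟨hwk, hPk⟩ := hpre k le_rfl
    have hstep := (hs k (by omega)).2 hkf
    have hck : c k = (Lang.while C p q, (c k).2) := by rw [← hwk]
    rw [hck] at hstep
    have hcomp1 := isComp_shift ⟨hn, h0, hs⟩ (k + 1) (by omega)
    have hE1 := envC_shift hE (k + 1)
    rcases pstep_while_inv hstep with ⟨hC, hy⟩ | ⟨hC, hy⟩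
    · -- while-true case
      refine combine (k + 1) (by omega) ?_ ?_ ?_
      · intro j hj
        rw [(hpre j (by omega)).1]
        simp
      · intro j hj hjf
        rcases Nat.lt_or_ge j k with h' | h'
        · rw [hkmin j h'] at hjf
          exact absurd hjf (by simp)
        · have hjk : j = k := by omega
          rw [hjk]
          have hst2 : (c (k + 1)).2 = (c k).2 := by rw [hy]
          rw [hst2]
          exact hGrefl _
      · -- suffix after entering the loop body
        have hcomp1' : IsComp ρ (Lang.seq p (Lang.seq Lang.skip (Lang.while C p q)))
            (n - (k + 1)) (fun i => c (i + (k + 1))) (fun i => e (i + (k + 1))) := by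
          have h' := hcomp1
          rw [hy] at h'
          exact h'
        have hP1 : P ((fun i => c (i + (k + 1))) 0).2 ∧ C ((fun i => c (i + (k + 1))) 0).2 := by
          have h0' : ((fun i => c (i + (k + 1))) 0).2 = (c k).2 := by
            show (c (0 + (k + 1))).2 = (c k).2
            rw [Nat.zero_add, hy]
          rw [h0']
          exact ⟨hPk, hC⟩
        rcases seq_region hGrefl h1 h2 hcomp1' hE1 hP1 with
          ⟨hshape, hprog⟩ | ⟨m, hm1, hmsh, hme, hmex, hPm, hprogm⟩
        · constructor
          · intro i hi hsk _
            obtain ⟨x, hx⟩ := hshape i hi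
            rw [hx] at hsk
            exact absurd hsk (by simp)
          · exact hprog
        · refine combine (m + 1) (by omega) ?_ ?_ ?_
          · intro j hj
            obtain ⟨x, hx⟩ := hmsh j (by omega)
            rw [hx]
            simp
          · intro j hj hjf
            exact hprogm j (by omega) hjf
          · -- suffix: seq skip (while ...)
            have hcomp2 : IsComp ρ (Lang.seq Lang.skip (Lang.while C p q))
                (n - (k + 1) - (m + 1))
                (fun i => (fun i => c (i + (k + 1))) (i + (m + 1)))
                (fun i => (fun i => e (i + (k + 1))) (i + (m + 1))) := by
              have h' : IsComp ρ (c (m + 1 + (k + 1))).1 (n - (k + 1) - (m + 1))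
                  (fun i => (fun i => c (i + (k + 1))) (i + (m + 1)))
                  (fun i => (fun i => e (i + (k + 1))) (i + (m + 1))) :=
                isComp_shift hcomp1' (m + 1) (by omega)
              rw [hmex] at h'
              exact h'
            have hE2 := envC_shift hE1 (m + 1)
            have hP2 : P ((fun i => (fun i => c (i + (k + 1))) (i + (m + 1))) 0).2 := by
              show P (c (0 + (m + 1) + (k + 1))).2
              rw [Nat.zero_add]
              have hmm : (c (m + 1 + (k + 1))).2 = (c (m + (k + 1))).2 := by rw [hmex]
              rw [hmm]
              exact hPm
            rcases seq_region hGrefl h1 (skip_rule h1) hcomp2 hE2 hP2 with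
              ⟨hshape2, hprog2⟩ | ⟨m₂, hm21, hm2sh, hm2e, hm2ex, hPm2, hprogm2⟩
            · constructor
              · intro i hi hsk _
                obtain ⟨x, hx⟩ := hshape2 i hi
                rw [hx] at hsk
                exact absurd hsk (by simp)
              · exact hprog2
            · have hm2ex' : c (m₂ + 1 + (m + 1) + (k + 1)) =
                  (Lang.while C p q, (c (m₂ + (m + 1) + (k + 1))).2) := hm2ex
              refine combine (m₂ + 1) (by omega) ?_ ?_ ?_
              · intro j hj
                obtain ⟨x, hx⟩ := hm2sh j (by omega)
                rw [hx]
                simp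
              · intro j hj hjf
                exact hprogm2 j (by omega) hjf
              · -- suffix: back at the while loop, apply induction
                have hcomp3 : IsComp ρ (Lang.while C p q)
                    (n - (k + 1) - (m + 1) - (m₂ + 1))
                    (fun i => (fun i => (fun i => c (i + (k + 1))) (i + (m + 1))) (i + (m₂ + 1)))
                    (fun i => (fun i => (fun i => e (i + (k + 1))) (i + (m + 1))) (i + (m₂ + 1))) := by
                  have h' : IsComp ρ (c (m₂ + 1 + (m + 1) + (k + 1))).1
                      (n - (k + 1) - (m + 1) - (m₂ + 1))
                      (fun i => (fun i => (fun i => c (i + (k + 1))) (i + (m + 1))) (i + (m₂ + 1)))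
                      (fun i => (fun i => (fun i => e (i + (k + 1))) (i + (m + 1))) (i + (m₂ + 1))) :=
                    isComp_shift hcomp2 (m₂ + 1) (by omega)
                  rw [hm2ex'] at h'
                  exact h'
                have hE3 := envC_shift hE2 (m₂ + 1)
                have hP3 : P ((fun i => (fun i => (fun i => c (i + (k + 1))) (i + (m + 1))) (i + (m₂ + 1))) 0).2 := by
                  show P (c (0 + (m₂ + 1) + (m + 1) + (k + 1))).2
                  rw [Nat.zero_add]
                  have hmm : (c (m₂ + 1 + (m + 1) + (k + 1))).2 = (c (m₂ + (m + 1) + (k + 1))).2 := by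
                    rw [hm2ex']
                  rw [hmm]
                  exact hPm2
                exact IH (n - (k + 1) - (m + 1) - (m₂ + 1)) (by omega) _ _ hcomp3 hE3 hP3
    · -- while-false case
      refine combine (k + 1) (by omega) ?_ ?_ ?_
      · intro j hj
        rw [(hpre j (by omega)).1]
        simp
      · intro j hj hjf
        rcases Nat.lt_or_ge j k with h' | h'
        · rw [hkmin j h'] at hjf
          exact absurd hjf (by simp)
        · have hjk : j = k := by omega
          rw [hjk]
          have hst2 : (c (k + 1)).2 = (c k).2 := by rw [hy]
          rw [hst2]
          exact hGrefl _
      · have hcomp1' : IsComp ρ q (n - (k + 1))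
            (fun i => c (i + (k + 1))) (fun i => e (i + (k + 1))) := by
          have h' := hcomp1
          rw [hy] at h'
          exact h'
        have hP1 : P ((fun i => c (i + (k + 1))) 0).2 ∧ ¬ C ((fun i => c (i + (k + 1))) 0).2 := by
          have h0' : ((fun i => c (i + (k + 1))) 0).2 = (c k).2 := by
            show (c (0 + (k + 1))).2 = (c k).2
            rw [Nat.zero_add, hy]
          rw [h0']
          exact ⟨hPk, hC⟩
        exact h3 (n - (k + 1)) _ _ hcomp1' hE1 hP1
  · -- no program step at all
    push_neg at hex
    have hall : ∀ i, i < n → (c i).1 = Lang.while C p q := by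
      intro i
      induction i with
      | zero => exact fun _ => h0
      | succ i ih =>
        intro hi
        have he : e i = true := by simpa using hex i (by omega)
        rw [(hs i (by omega)).1 he]
        exact ih (by omega)
    constructor
    · intro i hi hsk _
      rw [hall i hi] at hsk
      exact absurd hsk (by simp)
    · intro i hi hf
      exact absurd hf (by simpa using hex i hi)
end
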